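/- Let k > 0, c > 0, C ≥ 0, S ≥ 0, and let b, g : ℕ → ℝ be nonnegative sequences satisfying (1 + k)·b(n) ≤ b(n−1) + k·C·(1 + c·k)^{−n}·(1 + g(n)) for all n ≥ 1, and k·∑_{m=1}^{n} g(m) ≤ S for all n ≥ 1. Then for all n ≥ 0: if c > 1 then b(n) ≤ (b(0) + C/(c−1) + C·S)·exp(−k·n/(1+k)); if c = 1 then b(n) ≤ (b(0) + C·k·n + C·S)·exp(−k·n/(1+k)); if c < 1 then b(n) ≤ (b(0) + C/(1−c) + C·S)·exp(−c·k·n/(1+c·k)). -/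

import Mathlib

private lemma geo_aux (q : ℝ) (n : ℕ) :
    (1 - q) * ∑ m ∈ Finset.Icc 1 n, q ^ m = q - q ^ (n + 1) := by
  induction n with
  | zero => simp
  | succ n ih =>
    rw [Finset.sum_Icc_succ_top (by omega), mul_add, ih]
    ring

private lemma geo_le (q : ℝ) (h0 : 0 ≤ q) (h1 : q < 1) (n : ℕ) :
    ∑ m ∈ Finset.Icc 1 n, q ^ m ≤ q / (1 - q) := by
  rw [le_div_iff₀ (by linarith)]
  have h := geo_aux q n
  nlinarith [pow_nonneg h0 (n + 1)]

private lemma geo_aux2 (q : ℝ) (n : ℕ) :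
    (1 - q) * ∑ j ∈ Finset.range n, q ^ j = 1 - q ^ n := by
  induction n with
  | zero => simp
  | succ n ih =>
    rw [Finset.sum_range_succ, mul_add, ih]
    ring

private lemma geo_le2 (q : ℝ) (h0 : 0 ≤ q) (h1 : q < 1) (n : ℕ) :
    ∑ j ∈ Finset.range n, q ^ j ≤ 1 / (1 - q) := by
  rw [le_div_iff₀ (by linarith)]
  have h := geo_aux2 q n
  nlinarith [pow_nonneg h0 n]

private lemma geo_succ (q : ℝ) (n : ℕ) :
    ∑ j ∈ Finset.range (n + 1), q ^ j = q * ∑ j ∈ Finset.range n, q ^ j + 1 := by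
  rw [Finset.sum_range_succ', Finset.mul_sum]
  simp only [pow_zero]
  congr 1
  apply Finset.sum_congr rfl
  intro j _
  rw [pow_succ]
  ring

private lemma exp_bound (lam : ℝ) (hlam : 0 < lam) (n : ℕ) :
    ((1 + lam) ^ n)⁻¹ ≤ Real.exp (-(lam * n) / (1 + lam)) := by
  have h1l : (0:ℝ) < 1 + lam := by linarith
  have h1 : (1 + lam)⁻¹ ≤ Real.exp (-(lam / (1 + lam))) := by
    have h2 := Real.add_one_le_exp (-(lam / (1 + lam)))
    have h3 : -(lam / (1 + lam)) + 1 = (1 + lam)⁻¹ := by field_simp; ring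
    linarith
  calc ((1 + lam) ^ n)⁻¹ = ((1 + lam)⁻¹) ^ n := by rw [inv_pow]
    _ ≤ (Real.exp (-(lam / (1 + lam)))) ^ n :=
        pow_le_pow_left₀ (by positivity) h1 n
    _ = Real.exp (-(lam * n) / (1 + lam)) := by
        rw [← Real.exp_nat_mul]
        congr 1
        ring

/-- Gronwall unrolling used for the cases `c ≥ 1` (with `lam = k`). -/
private lemma main_aux (k lam c C : ℝ) (hk : 0 < k) (hlam : 0 < lam) (hlamk : lam ≤ k)
    (hc : 0 < c) (hC : 0 ≤ C) (b g : ℕ → ℝ)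
    (hbnn : ∀ n : ℕ, 0 ≤ b n) (hgnn : ∀ n : ℕ, 0 ≤ g n)
    (hrec : ∀ n : ℕ, 1 ≤ n →
      (1 + k) * b n ≤ b (n - 1) + k * C * ((1 + c * k) ^ n)⁻¹ * (1 + g n)) :
    ∀ n : ℕ, (1 + lam) ^ n * b n ≤
      b 0 + ∑ m ∈ Finset.Icc 1 n,
        (k * C / (1 + k)) * ((1 + lam) / (1 + c * k)) ^ m * (1 + g m) := by
  have h1k : (0:ℝ) < 1 + k := by linarith
  have h1l : (0:ℝ) < 1 + lam := by linarith
  have h1ck : (0:ℝ) < 1 + c * k := by positivity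
  intro n
  induction n with
  | zero => simp
  | succ n ih =>
    have hrecn := hrec (n + 1) (by omega)
    simp only [Nat.add_sub_cancel] at hrecn
    have hP : (0:ℝ) < (1 + lam) ^ n := pow_pos h1l n
    have hg1 : (0:ℝ) ≤ 1 + g (n + 1) := by linarith [hgnn (n + 1)]
    have hT : (0:ℝ) ≤ k * C * ((1 + c * k) ^ (n + 1))⁻¹ * (1 + g (n + 1)) := by positivity
    set T : ℝ := k * C * ((1 + c * k) ^ (n + 1))⁻¹ * (1 + g (n + 1)) with hTdef
    have key : (1 + lam) ^ (n + 1) * b (n + 1) ≤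
        (1 + lam) ^ n * b n
          + (k * C / (1 + k)) * ((1 + lam) / (1 + c * k)) ^ (n + 1) * (1 + g (n + 1)) := by
      have hb1 : b (n + 1) ≤ (b n + T) / (1 + k) := by
        rw [le_div_iff₀ h1k]
        linarith [hrecn]
      have step1 : (1 + lam) ^ (n + 1) * b (n + 1) ≤
          (1 + lam) ^ (n + 1) * ((b n + T) / (1 + k)) :=
        mul_le_mul_of_nonneg_left hb1 (le_of_lt (pow_pos h1l _))
      have e1 : (1 + lam) ^ (n + 1) * ((b n + T) / (1 + k)) =
          ((1 + lam) ^ n * ((1 + lam) / (1 + k))) * b n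
            + (k * C / (1 + k)) * ((1 + lam) / (1 + c * k)) ^ (n + 1) * (1 + g (n + 1)) := by
        rw [hTdef, div_pow]
        field_simp
        ring
      have hfrac : (1 + lam) / (1 + k) ≤ 1 := by
        rw [div_le_one h1k]; linarith
      have e2 : ((1 + lam) ^ n * ((1 + lam) / (1 + k))) * b n ≤ (1 + lam) ^ n * b n := by
        apply mul_le_mul_of_nonneg_right _ (hbnn n)
        calc (1 + lam) ^ n * ((1 + lam) / (1 + k)) ≤ (1 + lam) ^ n * 1 :=
              mul_le_mul_of_nonneg_left hfrac (le_of_lt hP)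
          _ = (1 + lam) ^ n := by ring
      calc (1 + lam) ^ (n + 1) * b (n + 1) ≤
          (1 + lam) ^ (n + 1) * ((b n + T) / (1 + k)) := step1
        _ = ((1 + lam) ^ n * ((1 + lam) / (1 + k))) * b n
            + (k * C / (1 + k)) * ((1 + lam) / (1 + c * k)) ^ (n + 1) * (1 + g (n + 1)) := e1
        _ ≤ (1 + lam) ^ n * b n
            + (k * C / (1 + k)) * ((1 + lam) / (1 + c * k)) ^ (n + 1) * (1 + g (n + 1)) := by
            linarith
    rw [Finset.sum_Icc_succ_top (by omega)]
    linarith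

/-- Gronwall unrolling used for the case `c < 1`. -/
private lemma main_aux2 (k c C : ℝ) (hk : 0 < k) (hc : 0 < c) (hc1 : c < 1) (hC : 0 ≤ C)
    (b g : ℕ → ℝ)
    (hbnn : ∀ n : ℕ, 0 ≤ b n) (hgnn : ∀ n : ℕ, 0 ≤ g n)
    (hrec : ∀ n : ℕ, 1 ≤ n →
      (1 + k) * b n ≤ b (n - 1) + k * C * ((1 + c * k) ^ n)⁻¹ * (1 + g n)) :
    ∀ n : ℕ, (1 + c * k) ^ n * b n ≤
      b 0 + (k * C / (1 + k)) * ∑ j ∈ Finset.range n, ((1 + c * k) / (1 + k)) ^ j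
        + (k * C / (1 + k)) * ∑ m ∈ Finset.Icc 1 n, g m := by
  have h1k : (0:ℝ) < 1 + k := by linarith
  have h1ck : (0:ℝ) < 1 + c * k := by positivity
  have hs0 : (0:ℝ) ≤ (1 + c * k) / (1 + k) := by positivity
  have hs1 : (1 + c * k) / (1 + k) ≤ 1 := by
    rw [div_le_one h1k]; nlinarith
  have hA : (0:ℝ) ≤ k * C / (1 + k) := by positivity
  intro n
  induction n with
  | zero => simp
  | succ n ih =>
    have hrecn := hrec (n + 1) (by omega)
    simp only [Nat.add_sub_cancel] at hrecn
    have hg1 : (0:ℝ) ≤ 1 + g (n + 1) := by linarith [hgnn (n + 1)]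
    have hT : (0:ℝ) ≤ k * C * ((1 + c * k) ^ (n + 1))⁻¹ * (1 + g (n + 1)) := by positivity
    set T : ℝ := k * C * ((1 + c * k) ^ (n + 1))⁻¹ * (1 + g (n + 1)) with hTdef
    have key : (1 + c * k) ^ (n + 1) * b (n + 1) ≤
        ((1 + c * k) / (1 + k)) * ((1 + c * k) ^ n * b n)
          + (k * C / (1 + k)) * (1 + g (n + 1)) := by
      have hb1 : b (n + 1) ≤ (b n + T) / (1 + k) := by
        rw [le_div_iff₀ h1k]
        linarith [hrecn]
      have step1 : (1 + c * k) ^ (n + 1) * b (n + 1) ≤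
          (1 + c * k) ^ (n + 1) * ((b n + T) / (1 + k)) :=
        mul_le_mul_of_nonneg_left hb1 (le_of_lt (pow_pos h1ck _))
      have e1 : (1 + c * k) ^ (n + 1) * ((b n + T) / (1 + k)) =
          ((1 + c * k) / (1 + k)) * ((1 + c * k) ^ n * b n)
            + (k * C / (1 + k)) * (1 + g (n + 1)) := by
        rw [hTdef]
        field_simp
        ring
      linarith [step1, le_of_eq e1]
    have hBnn : (0:ℝ) ≤ (1 + c * k) ^ n * b n :=
      mul_nonneg (le_of_lt (pow_pos h1ck n)) (hbnn n)
    have hRHSnn1 : (0:ℝ) ≤ ∑ j ∈ Finset.range n, ((1 + c * k) / (1 + k)) ^ j :=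
      Finset.sum_nonneg fun j _ => pow_nonneg hs0 j
    have hRHSnn2 : (0:ℝ) ≤ ∑ m ∈ Finset.Icc 1 n, g m :=
      Finset.sum_nonneg fun m _ => hgnn m
    have hstep2 : ((1 + c * k) / (1 + k)) * ((1 + c * k) ^ n * b n) ≤
        ((1 + c * k) / (1 + k)) *
          (b 0 + (k * C / (1 + k)) * ∑ j ∈ Finset.range n, ((1 + c * k) / (1 + k)) ^ j
            + (k * C / (1 + k)) * ∑ m ∈ Finset.Icc 1 n, g m) :=
      mul_le_mul_of_nonneg_left ih hs0
    rw [Finset.sum_Icc_succ_top (by omega), geo_succ]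
    have hb0 : ((1 + c * k) / (1 + k)) * b 0 ≤ b 0 := by
      nlinarith [hbnn 0]
    have hgsum : ((1 + c * k) / (1 + k)) * ((k * C / (1 + k)) * ∑ m ∈ Finset.Icc 1 n, g m)
        ≤ (k * C / (1 + k)) * ∑ m ∈ Finset.Icc 1 n, g m := by
      nlinarith [mul_nonneg hA hRHSnn2]
    nlinarith [key, hstep2, hgsum, hb0, mul_nonneg hA hg1]

private lemma sum_split (k C S q : ℝ) (hk : 0 < k) (hC : 0 ≤ C) (hS : 0 ≤ S)
    (hq0 : 0 ≤ q) (hq1 : q ≤ 1) (g : ℕ → ℝ) (hg : ∀ n : ℕ, 0 ≤ g n)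
    (hsum : ∀ n : ℕ, 1 ≤ n → k * ∑ m ∈ Finset.Icc 1 n, g m ≤ S) (n : ℕ) (E : ℝ)
    (hE : ∑ m ∈ Finset.Icc 1 n, (k * C / (1 + k)) * q ^ m ≤ E) :
    ∑ m ∈ Finset.Icc 1 n, (k * C / (1 + k)) * q ^ m * (1 + g m) ≤ E + C * S := by
  have h1k : (0:ℝ) < 1 + k := by linarith
  have hsplit : ∑ m ∈ Finset.Icc 1 n, (k * C / (1 + k)) * q ^ m * (1 + g m) =
      (∑ m ∈ Finset.Icc 1 n, (k * C / (1 + k)) * q ^ m)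
        + ∑ m ∈ Finset.Icc 1 n, (k * C / (1 + k)) * q ^ m * g m := by
    rw [← Finset.sum_add_distrib]
    apply Finset.sum_congr rfl
    intro m _
    ring
  rw [hsplit]
  have hsecond : ∑ m ∈ Finset.Icc 1 n, (k * C / (1 + k)) * q ^ m * g m ≤ C * S := by
    have hstep : ∑ m ∈ Finset.Icc 1 n, (k * C / (1 + k)) * q ^ m * g m ≤
        ∑ m ∈ Finset.Icc 1 n, (k * C / (1 + k)) * g m := by
      apply Finset.sum_le_sum
      intro m _
      have hqm : q ^ m ≤ 1 := pow_le_one₀ hq0 hq1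
      have hA : (0:ℝ) ≤ k * C / (1 + k) := by positivity
      have h1 : k * C / (1 + k) * q ^ m ≤ k * C / (1 + k) := by
        nlinarith [mul_nonneg hA (sub_nonneg.mpr hqm)]
      exact mul_le_mul_of_nonneg_right h1 (hg m)
    rcases Nat.eq_zero_or_pos n with rfl | hn
    · simpa using mul_nonneg hC hS
    · have hgs := hsum n hn
      have hgs0 : (0:ℝ) ≤ ∑ m ∈ Finset.Icc 1 n, g m :=
        Finset.sum_nonneg fun m _ => hg m
      calc ∑ m ∈ Finset.Icc 1 n, (k * C / (1 + k)) * q ^ m * g m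
          ≤ ∑ m ∈ Finset.Icc 1 n, (k * C / (1 + k)) * g m := hstep
        _ = (C / (1 + k)) * (k * ∑ m ∈ Finset.Icc 1 n, g m) := by
            rw [Finset.mul_sum]; rw [Finset.mul_sum]
            apply Finset.sum_congr rfl
            intro m _
            ring
        _ ≤ (C / (1 + k)) * S := by
            apply mul_le_mul_of_nonneg_left hgs (by positivity)
        _ ≤ C * S := by
            apply mul_le_mul_of_nonneg_right _ hS
            rw [div_le_iff₀ h1k]
            nlinarith
  linarith

private lemma finish_aux (lam K : ℝ) (hlam : 0 < lam)
    (b : ℕ → ℝ) (hbnn : ∀ n : ℕ, 0 ≤ b n) (n : ℕ)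
    (h : (1 + lam) ^ n * b n ≤ K) :
    b n ≤ K * Real.exp (-(lam * n) / (1 + lam)) := by
  have h1l : (0:ℝ) < 1 + lam := by linarith
  have hP : (0:ℝ) < (1 + lam) ^ n := pow_pos h1l n
  have hK : 0 ≤ K := le_trans (mul_nonneg (le_of_lt hP) (hbnn n)) h
  have hb : b n ≤ K * ((1 + lam) ^ n)⁻¹ := by
    rw [← div_eq_mul_inv, le_div_iff₀ hP]
    nlinarith
  calc b n ≤ K * ((1 + lam) ^ n)⁻¹ := hb
    _ ≤ K * Real.exp (-(lam * n) / (1 + lam)) :=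
        mul_le_mul_of_nonneg_left (exp_bound lam hlam n) hK

/-- Exponential-decay form of the Corollary to Theorem 3.7 (and Theorem 4.9):
three-case exponential decay of `b(n)`. -/
theorem stmt_11 (k c C S : ℝ) (hk : 0 < k) (hc : 0 < c) (hC : 0 ≤ C) (hS : 0 ≤ S)
    (b g : ℕ → ℝ)
    (hbnn : ∀ n : ℕ, 0 ≤ b n) (hgnn : ∀ n : ℕ, 0 ≤ g n)
    (hrec : ∀ n : ℕ, 1 ≤ n →
      (1 + k) * b n ≤ b (n - 1) + k * C * ((1 + c * k) ^ n)⁻¹ * (1 + g n))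
    (hsum : ∀ n : ℕ, 1 ≤ n → k * ∑ m ∈ Finset.Icc 1 n, g m ≤ S) :
    ∀ n : ℕ,
      (1 < c → b n ≤ (b 0 + C / (c - 1) + C * S) * Real.exp (-(k * n) / (1 + k))) ∧
      (c = 1 → b n ≤ (b 0 + C * k * n + C * S) * Real.exp (-(k * n) / (1 + k))) ∧
      (c < 1 → b n ≤ (b 0 + C / (1 - c) + C * S) * Real.exp (-(c * k * n) / (1 + c * k))) := by
  have h1k : (0:ℝ) < 1 + k := by linarith
  have h1ck : (0:ℝ) < 1 + c * k := by positivity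
  intro n
  refine ⟨?_, ?_, ?_⟩
  · -- c > 1
    intro hc1
    have hq0 : (0:ℝ) ≤ (1 + k) / (1 + c * k) := by positivity
    have hq1 : (1 + k) / (1 + c * k) < 1 := by
      rw [div_lt_one h1ck]; nlinarith
    have hA : (0:ℝ) ≤ k * C / (1 + k) := by positivity
    have hE : ∑ m ∈ Finset.Icc 1 n, (k * C / (1 + k)) * ((1 + k) / (1 + c * k)) ^ m
        ≤ C / (c - 1) := by
      rw [← Finset.mul_sum]
      calc (k * C / (1 + k)) * ∑ m ∈ Finset.Icc 1 n, ((1 + k) / (1 + c * k)) ^ m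
          ≤ (k * C / (1 + k)) *
              (((1 + k) / (1 + c * k)) / (1 - (1 + k) / (1 + c * k))) :=
            mul_le_mul_of_nonneg_left (geo_le _ hq0 hq1 n) hA
        _ = C / (c - 1) := by
            have hc1' : c - 1 ≠ 0 := by linarith
            have h1mq : 1 - (1 + k) / (1 + c * k) = ((c - 1) * k) / (1 + c * k) := by
              field_simp; ring
            rw [h1mq]
            field_simp
    have hmain := main_aux k k c C hk hk le_rfl hc hC b g hbnn hgnn hrec n
    have hsplit := sum_split k C S ((1 + k) / (1 + c * k)) hk hC hS hq0 (le_of_lt hq1)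
      g hgnn hsum n (C / (c - 1)) hE
    exact finish_aux k (b 0 + C / (c - 1) + C * S) hk b hbnn n (by linarith)
  · -- c = 1
    intro hc1
    subst hc1
    have hqeq : (1 + k) / (1 + 1 * k) = 1 := by
      rw [one_mul]; field_simp
    have hE : ∑ m ∈ Finset.Icc 1 n, (k * C / (1 + k)) * ((1 + k) / (1 + 1 * k)) ^ m
        ≤ C * k * n := by
      simp only [hqeq, one_pow, mul_one]
      rw [Finset.sum_const, Nat.card_Icc, nsmul_eq_mul]
      simp only [Nat.add_sub_cancel]
      have hle : k * C / (1 + k) ≤ C * k := by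
        rw [div_le_iff₀ h1k]
        nlinarith [mul_nonneg (mul_nonneg hC hk.le) hk.le]
      have hn0 : (0:ℝ) ≤ (n:ℝ) := Nat.cast_nonneg n
      nlinarith [div_nonneg (mul_nonneg (le_of_lt hk) hC) (le_of_lt h1k)]
    have hmain := main_aux k k 1 C hk hk le_rfl one_pos hC b g hbnn hgnn
      (by simpa using hrec) n
    have hsplit := sum_split k C S ((1 + k) / (1 + 1 * k)) hk hC hS (by positivity)
      (le_of_eq hqeq) g hgnn hsum n (C * k * n) hE
    exact finish_aux k (b 0 + C * k * n + C * S) hk b hbnn n (by linarith)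
  · -- c < 1
    intro hc1
    have hck : c * k < k := by nlinarith
    have hclam : (0:ℝ) < c * k := by positivity
    have hs0 : (0:ℝ) ≤ (1 + c * k) / (1 + k) := by positivity
    have hs1 : (1 + c * k) / (1 + k) < 1 := by
      rw [div_lt_one h1k]; linarith
    have hA : (0:ℝ) ≤ k * C / (1 + k) := by positivity
    have h1c : (0:ℝ) < 1 - c := by linarith
    have hmain := main_aux2 k c C hk hc hc1 hC b g hbnn hgnn hrec n
    have hE1 : (k * C / (1 + k)) * ∑ j ∈ Finset.range n, ((1 + c * k) / (1 + k)) ^ j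
        ≤ C / (1 - c) := by
      calc (k * C / (1 + k)) * ∑ j ∈ Finset.range n, ((1 + c * k) / (1 + k)) ^ j
          ≤ (k * C / (1 + k)) * (1 / (1 - (1 + c * k) / (1 + k))) :=
            mul_le_mul_of_nonneg_left (geo_le2 _ hs0 hs1 n) hA
        _ = C / (1 - c) := by
            have h1mq : 1 - (1 + c * k) / (1 + k) = ((1 - c) * k) / (1 + k) := by
              field_simp; ring
            rw [h1mq]
            field_simp
    have hE2 : (k * C / (1 + k)) * ∑ m ∈ Finset.Icc 1 n, g m ≤ C * S := by
      rcases Nat.eq_zero_or_pos n with rfl | hn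
      · simpa using mul_nonneg hC hS
      · have hgs := hsum n hn
        have hgs0 : (0:ℝ) ≤ ∑ m ∈ Finset.Icc 1 n, g m :=
          Finset.sum_nonneg fun m _ => hgnn m
        calc (k * C / (1 + k)) * ∑ m ∈ Finset.Icc 1 n, g m
            = (C / (1 + k)) * (k * ∑ m ∈ Finset.Icc 1 n, g m) := by ring
          _ ≤ (C / (1 + k)) * S := by
              apply mul_le_mul_of_nonneg_left hgs (by positivity)
          _ ≤ C * S := by
              apply mul_le_mul_of_nonneg_right _ hS
              rw [div_le_iff₀ h1k]
              nlinarith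
    exact finish_aux (c * k) (b 0 + C / (1 - c) + C * S) hclam b hbnn n (by linarith)
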